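/- Let π be a uniformly random permutation of a finite set Σ, and let T = T[1..m] be a fixed string over Σ with m ≥ 2 and T[i] ≠ T[i+1] for all i. Then the probability that the sequence π(T[1]), ..., π(T[m]) has no interior local minimum (no i ∈ (1,m) with π(T[i-1]) > π(T[i]) < π(T[i+1])) is at most 2/(⌊m/2⌋+1)!. -/

import Mathlib

lemma chain_lt_of_adj {α : Type*} [Preorder α] {k : ℕ} (f : ℕ → α)
    (hf : ∀ i, i < k → f i < f (i + 1)) : ∀ i j, i < j → j ≤ k → f i < f j := by
  intro i j hij hjk
  induction j with
  | zero => omega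
  | succ n ih =>
    rcases Nat.lt_or_ge i n with h' | h'
    · exact lt_trans (ih h' (by omega)) (hf n (by omega))
    · have : i = n := by omega
      subst this
      exact hf i (by omega)

lemma count_strictMono_le (Alph : Type*) [Fintype Alph] (N k : ℕ) (a : Fin k → Alph) :
    Nat.card {π : Alph ≃ Fin N // StrictMono (fun i => π (a i))} * Nat.factorial k ≤
      Nat.card (Alph ≃ Fin N) := by
  classical
  by_cases ha : Function.Injective a
  · set ι : Fin k ↪ Alph := ⟨a, ha⟩ with hι
    have hF : Function.Injective
        (fun p : {π : Alph ≃ Fin N // StrictMono (fun i => π (a i))} × Equiv.Perm (Fin k) =>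
          (p.2.viaEmbedding ι).trans p.1.1) := by
      rintro ⟨⟨π₁, h₁⟩, σ₁⟩ ⟨⟨π₂, h₂⟩, σ₂⟩ heq
      simp only at heq
      have happ : ∀ i : Fin k, π₁ (a (σ₁ i)) = π₂ (a (σ₂ i)) := by
        intro i
        have := congrArg (fun e : Alph ≃ Fin N => e (a i)) heq
        simp [Equiv.trans_apply, show a i = ι i from rfl,
          Equiv.Perm.viaEmbedding_apply] at this
        exact this
      have hout : ∀ x, x ∉ Set.range ι → π₁ x = π₂ x := by
        intro x hx
        have := congrArg (fun e : Alph ≃ Fin N => e x) heq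
        simpa [Equiv.trans_apply,
          Equiv.Perm.viaEmbedding_apply_of_notMem _ ι x hx] using this
      have e1 : (fun i => π₁ (a (σ₁ i))) = (fun i => π₂ (a (σ₂ i))) := funext happ
      have hrange : Set.range (fun i => π₁ (a i)) = Set.range (fun i => π₂ (a i)) := by
        have r1 := σ₁.surjective.range_comp (fun i => π₁ (a i))
        have r2 := σ₂.surjective.range_comp (fun i => π₂ (a i))
        rw [← r1, ← r2]
        exact congrArg Set.range (funext happ)
      haveI : WellFoundedLT (Fin k) := Finite.to_wellFoundedLT
      have hcomp : (fun i => π₁ (a i)) = (fun i => π₂ (a i)) :=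
        (h₁.range_inj h₂).mp hrange
      have hπ : π₁ = π₂ := by
        apply Equiv.ext
        intro x
        by_cases hx : x ∈ Set.range ι
        · obtain ⟨i, rfl⟩ := hx
          exact congrFun hcomp i
        · exact hout x hx
      have hσ : σ₁ = σ₂ := by
        apply Equiv.ext
        intro i
        have h' := happ i
        rw [hπ] at h'
        exact ha (π₂.injective h')
      simp only [Prod.mk.injEq, Subtype.mk.injEq]
      exact ⟨hπ, hσ⟩
    have hle := Nat.card_le_card_of_injective _ hF
    rwa [Nat.card_prod, Nat.card_eq_fintype_card (α := Equiv.Perm (Fin k)),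
      Fintype.card_perm, Fintype.card_fin] at hle
  · have hempty : IsEmpty {π : Alph ≃ Fin N // StrictMono (fun i => π (a i))} := by
      constructor
      rintro ⟨π, hπ⟩
      exact ha (fun i j hij => hπ.injective (show π (a i) = π (a j) by rw [hij]))
    rw [Nat.card_of_isEmpty]
    simp

/-- For a uniformly random bijection `π : Σ → Fin N` and a fixed string `T 1, ..., T m`
over `Σ` with distinct consecutive characters, the probability that the sequence
`π (T 1), ..., π (T m)` has no interior local minimum is at most `2/(⌊m/2⌋+1)!`,
stated in counting form. -/
theorem prob_no_local_min_le (Alph : Type*) [Fintype Alph] (N m : ℕ)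
    (hN : Fintype.card Alph = N) (hm : 2 ≤ m) (T : ℕ → Alph)
    (hT : ∀ i : ℕ, 1 ≤ i → i < m → T i ≠ T (i + 1)) :
    Nat.card {π : Alph ≃ Fin N // ∀ i : ℕ, 2 ≤ i → i + 1 ≤ m →
        ¬(π (T i) < π (T (i - 1)) ∧ π (T i) < π (T (i + 1)))} * Nat.factorial (m / 2 + 1) ≤
      2 * Nat.card (Alph ≃ Fin N) := by
  classical
  set h := m / 2 with hh
  set a : Fin (h + 1) → Alph := fun i => T (i + 1) with ha
  set b : Fin (h + 1) → Alph := fun i => T (m - i) with hb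
  set P : (Alph ≃ Fin N) → Prop := fun π => ∀ i : ℕ, 2 ≤ i → i + 1 ≤ m →
      ¬(π (T i) < π (T (i - 1)) ∧ π (T i) < π (T (i + 1))) with hP
  have key : ∀ π : Alph ≃ Fin N, P π →
      StrictMono (fun i : Fin (h + 1) => π (a i)) ∨
      StrictMono (fun i : Fin (h + 1) => π (b i)) := by
    intro π hπ
    by_cases hup : ∀ i, 1 ≤ i → i ≤ h → π (T i) < π (T (i + 1))
    · left
      intro i j hij
      exact chain_lt_of_adj (k := h) (fun n => π (T (n + 1)))
        (fun n hn => hup (n + 1) (by omega) (by omega)) i j hij (by omega)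
    · right
      push_neg at hup
      obtain ⟨j, hj1, hjh, hjup⟩ := hup
      have hdj : π (T (j + 1)) < π (T j) :=
        lt_of_le_of_ne hjup
          (fun e => hT j hj1 (by omega) (π.injective e.symm))
      have hdown : ∀ i, j ≤ i → i < m → π (T (i + 1)) < π (T i) := by
        intro i hji him
        induction i with
        | zero => omega
        | succ n ih =>
          rcases Nat.lt_or_ge n j with h' | h'
          · have hjn : j = n + 1 := by omega
            rw [← hjn]
            exact hdj
          · have hdn : π (T (n + 1)) < π (T n) := ih h' (by omega)
            have hnl := hπ (n + 1) (by omega) (by omega)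
            simp only [Nat.add_sub_cancel] at hnl
            have hne : π (T (n + 1)) ≠ π (T (n + 2)) :=
              fun e => hT (n + 1) (by omega) (by omega) (π.injective e)
            have : ¬ π (T (n + 1)) < π (T (n + 2)) := fun hlt => hnl ⟨hdn, hlt⟩
            have := lt_of_le_of_ne (not_lt.1 this) (Ne.symm hne)
            exact this
      intro i1 j1 hij
      refine chain_lt_of_adj (k := h) (fun n => π (T (m - n))) ?_ i1 j1 hij (by omega)
      intro n hn
      have key2 : π (T ((m - n - 1) + 1)) < π (T (m - n - 1)) :=
        hdown (m - n - 1) (by omega) (by omega)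
      have e1 : (m - n - 1) + 1 = m - n := by omega
      have e2 : m - (n + 1) = m - n - 1 := by omega
      rw [e1] at key2
      show π (T (m - n)) < π (T (m - (n + 1)))
      rw [e2]
      exact key2
  have hA := count_strictMono_le Alph N (h + 1) a
  have hB := count_strictMono_le Alph N (h + 1) b
  have hsub : {π : Alph ≃ Fin N | P π} ⊆
      {π : Alph ≃ Fin N | StrictMono (fun i : Fin (h + 1) => π (a i))} ∪
      {π : Alph ≃ Fin N | StrictMono (fun i : Fin (h + 1) => π (b i))} :=
    fun π hπ => key π hπ
  have hcard : Nat.card {π : Alph ≃ Fin N // P π} ≤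
      Nat.card {π : Alph ≃ Fin N // StrictMono (fun i : Fin (h + 1) => π (a i))} +
      Nat.card {π : Alph ≃ Fin N // StrictMono (fun i : Fin (h + 1) => π (b i))} := by
    calc Nat.card {π : Alph ≃ Fin N // P π}
        = Nat.card ({π : Alph ≃ Fin N | P π} : Set _) := rfl
      _ ≤ Nat.card (({π : Alph ≃ Fin N | StrictMono (fun i : Fin (h + 1) => π (a i))} ∪
            {π : Alph ≃ Fin N | StrictMono (fun i : Fin (h + 1) => π (b i))} : Set _)) := by
          simp only [Nat.card_coe_set_eq]
          exact Set.ncard_le_ncard hsub (Set.toFinite _)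
      _ ≤ _ := by
          simp only [Nat.card_coe_set_eq]
          exact Set.ncard_union_le _ _
  calc Nat.card {π : Alph ≃ Fin N // P π} * Nat.factorial (h + 1)
      ≤ (Nat.card {π : Alph ≃ Fin N // StrictMono (fun i : Fin (h + 1) => π (a i))} +
         Nat.card {π : Alph ≃ Fin N // StrictMono (fun i : Fin (h + 1) => π (b i))}) *
          Nat.factorial (h + 1) := Nat.mul_le_mul_right _ hcard
    _ = Nat.card {π : Alph ≃ Fin N // StrictMono (fun i : Fin (h + 1) => π (a i))} *
          Nat.factorial (h + 1) +
        Nat.card {π : Alph ≃ Fin N // StrictMono (fun i : Fin (h + 1) => π (b i))} *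
          Nat.factorial (h + 1) := add_mul _ _ _
    _ ≤ Nat.card (Alph ≃ Fin N) + Nat.card (Alph ≃ Fin N) := add_le_add hA hB
    _ = 2 * Nat.card (Alph ≃ Fin N) := (two_mul _).symm
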